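/- Let α = p/q ∈ ℚ \ ℤ with left parent γ_L = r/s. Identifying each rational x/y with the point (x/y, 1/y) in the plane, all elements of the left boundary sequence ∂_L(α) = { γ_L ⊕^k α : k ≥ 0 } lie on the straight line through (r/s, 1/s) and (p/q, 0), which has slope -q. -/

import Mathlib

/-- Let `α = p/q` be a non-integer rational with left parent `γ_L = r/s`
(so `p*s - q*r = 1` with `r/s < p/q`). Identifying `x/y` with the point `(x/y, 1/y)`,
every element `γ_L ⊕^k α = (r+kp)/(s+kq)` of the left boundary sequence lies on the
straight line through `(r/s, 1/s)` and `(p/q, 0)`, which has slope `-q`. -/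
theorem left_boundary_on_line (p q r s : ℤ) (hq : 0 < q) (hs : 0 < s)
    (hL : p * s - q * r = 1) :
    ((1 : ℝ) / s - 0) / ((r : ℝ) / s - (p : ℝ) / q) = -(q : ℝ) ∧
    ∀ k : ℕ, (1 : ℝ) / ((s : ℝ) + k * q) =
      -(q : ℝ) * (((r : ℝ) + k * p) / ((s : ℝ) + k * q) - (p : ℝ) / q) := by
  have hq' : (q : ℝ) ≠ 0 := by positivity
  have hs' : (s : ℝ) ≠ 0 := by positivity
  have hL' : (p : ℝ) * s - q * r = 1 := by exact_mod_cast hL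
  constructor
  · have hd : (r : ℝ) / s - (p : ℝ) / q = -1 / (s * q) := by
      field_simp
      linarith
    rw [hd]
    field_simp
    ring
  · intro k
    have hd : (s : ℝ) + k * q ≠ 0 := by positivity
    field_simp
    linear_combination (-1:ℝ) * hL'
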